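/- Let p ∈ [1,∞), s > 0, set p' = sp/(s+p). For finite Borel measures μ₁, μ₂ with finite p-th moments on a Polish space X and μ = μ₁ + μ₂, the upper quantization coefficient satisfies Q̄_{p,s}(μ)^{p'} ≤ Q̄_{p,s}(μ₁)^{p'} + Q̄_{p,s}(μ₂)^{p'}, where Q̄_{p,s}(ν) = limsup_{N→∞} N^{1/s} inf_{#S≤N} (∫ d(x,S)^p dν)^{1/p}. -/

import Mathlib

open MeasureTheory Filter Metric Set
open scoped ENNReal NNReal Topology

noncomputable def quantErr {X : Type*} [MetricSpace X] [MeasurableSpace X]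
    (μ : Measure X) (p : ℝ) (S : Set X) : ℝ≥0∞ :=
  (∫⁻ x, ENNReal.ofReal (infDist x S ^ p) ∂μ) ^ (1 / p)

noncomputable def quantErrN {X : Type*} [MetricSpace X] [MeasurableSpace X]
    (μ : Measure X) (p : ℝ) (N : ℕ) : ℝ≥0∞ :=
  ⨅ (S : Finset X) (_ : S.Nonempty) (_ : S.card ≤ N), quantErr μ p (S : Set X)

noncomputable def upperQuantCoeff {X : Type*} [MetricSpace X] [MeasurableSpace X]
    (μ : Measure X) (p s : ℝ) : ℝ≥0∞ :=
  Filter.limsup (fun N : ℕ => (N : ℝ≥0∞) ^ (1 / s) * quantErrN μ p N) Filter.atTop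

section Aux

variable {X : Type*} [MetricSpace X] [MeasurableSpace X]

lemma quantErr_anti (μ : Measure X) {p : ℝ} (hp : 0 < p) {S T : Set X}
    (hS : S.Nonempty) (hST : S ⊆ T) : quantErr μ p T ≤ quantErr μ p S := by
  refine ENNReal.rpow_le_rpow (lintegral_mono fun x => ?_) (by positivity)
  exact ENNReal.ofReal_le_ofReal
    (Real.rpow_le_rpow infDist_nonneg (infDist_le_infDist_of_subset hST hS) hp.le)

lemma quantErr_add_measure (μ₁ μ₂ : Measure X) {p : ℝ} (hp : 0 < p) (S : Set X) :
    quantErr (μ₁ + μ₂) p S = (quantErr μ₁ p S ^ p + quantErr μ₂ p S ^ p) ^ (1 / p) := by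
  unfold quantErr
  rw [lintegral_add_measure, ← ENNReal.rpow_mul, ← ENNReal.rpow_mul,
    one_div_mul_cancel hp.ne']
  simp only [ENNReal.rpow_one]

lemma quantErrN_le_quantErr (μ : Measure X) (p : ℝ) {N : ℕ} {S : Finset X}
    (h1 : S.Nonempty) (h2 : S.card ≤ N) : quantErrN μ p N ≤ quantErr μ p (S : Set X) :=
  iInf_le_of_le S (iInf_le_of_le h1 (iInf_le _ h2))

lemma quantErrN_anti (μ : Measure X) (p : ℝ) {N M : ℕ} (h : N ≤ M) :
    quantErrN μ p M ≤ quantErrN μ p N :=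
  le_iInf fun S => le_iInf fun h1 => le_iInf fun h2 =>
    quantErrN_le_quantErr μ p h1 (h2.trans h)

lemma ennreal_rpow_iInf {ι : Sort*} (f : ι → ℝ≥0∞) {c : ℝ} (hc : 0 < c) :
    (⨅ i, f i) ^ c = ⨅ i, f i ^ c := by
  have h := (ENNReal.orderIsoRpow c hc).map_iInf f
  simp only [ENNReal.orderIsoRpow_apply] at h
  exact h

lemma quantErrN_rpow (μ : Measure X) (p : ℝ) (hp : 0 < p) (N : ℕ) :
    quantErrN μ p N ^ p
      = ⨅ (S : Finset X) (_ : S.Nonempty) (_ : S.card ≤ N), quantErr μ p (S : Set X) ^ p := by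
  unfold quantErrN
  rw [ennreal_rpow_iInf _ hp]
  refine iInf_congr fun S => ?_
  rw [ennreal_rpow_iInf _ hp]
  refine iInf_congr fun h1 => ?_
  rw [ennreal_rpow_iInf _ hp]

lemma quantErrN_add_le (μ₁ μ₂ : Measure X) {p : ℝ} (hp : 0 < p) (N₁ N₂ : ℕ) :
    quantErrN (μ₁ + μ₂) p (N₁ + N₂) ≤
      (quantErrN μ₁ p N₁ ^ p + quantErrN μ₂ p N₂ ^ p) ^ (1 / p) := by
  classical
  have key : ∀ (S₁ S₂ : Finset X), S₁.Nonempty → S₂.Nonempty → S₁.card ≤ N₁ →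
      S₂.card ≤ N₂ → quantErrN (μ₁ + μ₂) p (N₁ + N₂) ^ p ≤
        quantErr μ₁ p (S₁ : Set X) ^ p + quantErr μ₂ p (S₂ : Set X) ^ p := by
    intro S₁ S₂ h1 h2 h1' h2'
    have hle : quantErrN (μ₁ + μ₂) p (N₁ + N₂) ≤ quantErr (μ₁ + μ₂) p ((S₁ ∪ S₂ : Finset X) : Set X) :=
      quantErrN_le_quantErr _ _ (h1.mono Finset.subset_union_left)
        ((Finset.card_union_le _ _).trans (add_le_add h1' h2'))
    rw [quantErr_add_measure _ _ hp] at hle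
    have hle2 : quantErrN (μ₁ + μ₂) p (N₁ + N₂) ^ p ≤
        quantErr μ₁ p ((S₁ ∪ S₂ : Finset X) : Set X) ^ p
          + quantErr μ₂ p ((S₁ ∪ S₂ : Finset X) : Set X) ^ p := by
      calc quantErrN (μ₁ + μ₂) p (N₁ + N₂) ^ p
          ≤ ((quantErr μ₁ p ((S₁ ∪ S₂ : Finset X) : Set X) ^ p
              + quantErr μ₂ p ((S₁ ∪ S₂ : Finset X) : Set X) ^ p) ^ (1/p)) ^ p :=
            ENNReal.rpow_le_rpow hle hp.le
        _ = _ := by rw [← ENNReal.rpow_mul, one_div_mul_cancel hp.ne', ENNReal.rpow_one]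
    refine hle2.trans (add_le_add ?_ ?_)
    · refine ENNReal.rpow_le_rpow (quantErr_anti μ₁ hp ?_ ?_) hp.le
      · exact_mod_cast h1
      · rw [Finset.coe_union]; exact subset_union_left
    · refine ENNReal.rpow_le_rpow (quantErr_anti μ₂ hp ?_ ?_) hp.le
      · exact_mod_cast h2
      · rw [Finset.coe_union]; exact subset_union_right
  have key2 : quantErrN (μ₁ + μ₂) p (N₁ + N₂) ^ p ≤
      quantErrN μ₁ p N₁ ^ p + quantErrN μ₂ p N₂ ^ p := by
    rw [quantErrN_rpow μ₁ p hp, quantErrN_rpow μ₂ p hp, ENNReal.iInf_add]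
    refine le_iInf fun S₁ => ?_
    rw [ENNReal.iInf_add]
    refine le_iInf fun h1 => ?_
    rw [ENNReal.iInf_add]
    refine le_iInf fun h1' => ?_
    rw [ENNReal.add_iInf]
    refine le_iInf fun S₂ => ?_
    rw [ENNReal.add_iInf]
    refine le_iInf fun h2 => ?_
    rw [ENNReal.add_iInf]
    refine le_iInf fun h2' => ?_
    exact key S₁ S₂ h1 h2 h1' h2'
  calc quantErrN (μ₁ + μ₂) p (N₁ + N₂)
      = (quantErrN (μ₁ + μ₂) p (N₁ + N₂) ^ p) ^ (1/p) := by
        rw [← ENNReal.rpow_mul, mul_one_div_cancel hp.ne', ENNReal.rpow_one]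
    _ ≤ _ := ENNReal.rpow_le_rpow key2 (by positivity)

lemma my_limsup_add_le (u v : ℕ → ℝ≥0∞) :
    limsup (fun n => u n + v n) atTop ≤ limsup u atTop + limsup v atTop := by
  refine ENNReal.le_of_forall_pos_le_add fun ε hε hab => ?_
  have ha : limsup u atTop ≠ ∞ := (lt_of_le_of_lt le_self_add hab).ne
  have hb : limsup v atTop ≠ ∞ := (lt_of_le_of_lt le_add_self hab).ne
  have hδ : ((ε / 2 : ℝ≥0) : ℝ≥0∞) ≠ 0 := by
    exact_mod_cast (half_pos hε).ne'
  have eu : ∀ᶠ n in atTop, u n < limsup u atTop + (ε/2 : ℝ≥0) :=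
    eventually_lt_of_limsup_lt (ENNReal.lt_add_right ha hδ)
  have ev : ∀ᶠ n in atTop, v n < limsup v atTop + (ε/2 : ℝ≥0) :=
    eventually_lt_of_limsup_lt (ENNReal.lt_add_right hb hδ)
  refine limsup_le_of_le (by isBoundedDefault) ?_
  filter_upwards [eu, ev] with n h1 h2
  calc u n + v n ≤ (limsup u atTop + (ε/2 : ℝ≥0)) + (limsup v atTop + (ε/2 : ℝ≥0)) :=
        add_le_add h1.le h2.le
    _ = limsup u atTop + limsup v atTop + (((ε/2 : ℝ≥0) : ℝ≥0∞) + ((ε/2 : ℝ≥0) : ℝ≥0∞)) := by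
        ring
    _ = limsup u atTop + limsup v atTop + ε := by
        rw [← ENNReal.coe_add]
        norm_cast
        rw [add_halves]

lemma limsup_bound (μ₁ μ₂ : Measure X) {p s t : ℝ} (hp : 0 < p) (hs : 0 < s)
    (ht0 : 0 < t) (ht1 : t < 1) :
    upperQuantCoeff (μ₁ + μ₂) p s ≤
      ((ENNReal.ofReal t)⁻¹ ^ (p / s) * upperQuantCoeff μ₁ p s ^ p
        + (ENNReal.ofReal (1 - t))⁻¹ ^ (p / s) * upperQuantCoeff μ₂ p s ^ p) ^ (1 / p) := by
  have hps : (0:ℝ) ≤ p / s := by positivity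
  set α₁ := upperQuantCoeff μ₁ p s with hα₁def
  set α₂ := upperQuantCoeff μ₂ p s with hα₂def
  set T₁ : ℝ≥0∞ := (ENNReal.ofReal t)⁻¹ with hT₁def
  set T₂ : ℝ≥0∞ := (ENNReal.ofReal (1 - t))⁻¹ with hT₂def
  have ht2 : (0:ℝ) < 1 - t := by linarith
  have hT₁0 : T₁ ≠ 0 := by simp [hT₁def]
  have hT₁top : T₁ ≠ ∞ := by
    simp [hT₁def, ENNReal.inv_ne_top, (ENNReal.ofReal_pos.2 ht0).ne']
  have hT₂0 : T₂ ≠ 0 := by simp [hT₂def]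
  have hT₂top : T₂ ≠ ∞ := by
    simp [hT₂def, ENNReal.inv_ne_top, (ENNReal.ofReal_pos.2 ht2).ne']
  have hT₁ps0 : T₁ ^ (p/s) ≠ 0 :=
    (ENNReal.rpow_pos (pos_iff_ne_zero.mpr hT₁0) hT₁top).ne'
  have hT₁pstop : T₁ ^ (p/s) ≠ ∞ := ENNReal.rpow_ne_top_of_nonneg hps hT₁top
  have hT₂ps0 : T₂ ^ (p/s) ≠ 0 :=
    (ENNReal.rpow_pos (pos_iff_ne_zero.mpr hT₂0) hT₂top).ne'
  have hT₂pstop : T₂ ^ (p/s) ≠ ∞ := ENNReal.rpow_ne_top_of_nonneg hps hT₂top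
  by_cases hα₁ : α₁ = ∞
  · have : T₁ ^ (p/s) * α₁ ^ p = ∞ := by
      rw [hα₁, ENNReal.top_rpow_of_pos hp, ENNReal.mul_top hT₁ps0]
    rw [this, top_add, ENNReal.top_rpow_of_pos (by positivity)]
    exact le_top
  by_cases hα₂ : α₂ = ∞
  · have : T₂ ^ (p/s) * α₂ ^ p = ∞ := by
      rw [hα₂, ENNReal.top_rpow_of_pos hp, ENNReal.mul_top hT₂ps0]
    rw [this, add_top, ENNReal.top_rpow_of_pos (by positivity)]
    exact le_top
  -- main case
  set N₁ : ℕ → ℕ := fun N => ⌊t * (N:ℝ)⌋₊ with hN₁def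
  set N₂ : ℕ → ℕ := fun N => N - N₁ N with hN₂def
  have hN₁le : ∀ N, N₁ N ≤ N := by
    intro N
    have h1 : t * (N:ℝ) ≤ (N:ℝ) := by nlinarith [(Nat.cast_nonneg N : (0:ℝ) ≤ (N:ℝ))]
    calc N₁ N ≤ ⌊(N:ℝ)⌋₊ := Nat.floor_mono h1
      _ = N := Nat.floor_natCast N
  have hsum : ∀ N, N₁ N + N₂ N = N := fun N => Nat.add_sub_cancel' (hN₁le N)
  have hN₁flr : ∀ N, (N₁ N : ℝ) ≤ t * N := fun N =>
    Nat.floor_le (mul_nonneg ht0.le (Nat.cast_nonneg N))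
  have hN₁_t : Tendsto N₁ atTop atTop := tendsto_nat_floor_mul_atTop t ht0
  have hN₂cast : ∀ N, (N₂ N : ℝ) = (N:ℝ) - (N₁ N : ℝ) := by
    intro N
    simp only [hN₂def]
    exact_mod_cast Nat.cast_sub (hN₁le N)
  have hN₂_t : Tendsto N₂ atTop atTop := by
    rw [← tendsto_natCast_atTop_iff (R := ℝ)]
    have h1 : Tendsto (fun N : ℕ => (1 - t) * (N:ℝ)) atTop atTop :=
      Tendsto.const_mul_atTop (by linarith) tendsto_natCast_atTop_atTop
    refine tendsto_atTop_mono (fun N => ?_) h1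
    rw [hN₂cast]
    have := hN₁flr N
    nlinarith
  -- real ratios
  have base : Tendsto (fun N : ℕ => ((N₁ N : ℕ) : ℝ) / N) atTop (𝓝 t) :=
    (tendsto_nat_floor_mul_div_atTop ht0.le).comp tendsto_natCast_atTop_atTop
  have hr₁ : Tendsto (fun N : ℕ => (N : ℝ) / (N₁ N)) atTop (𝓝 t⁻¹) := by
    simpa [inv_div] using base.inv₀ ht0.ne'
  have base2 : Tendsto (fun N : ℕ => ((N₂ N : ℕ) : ℝ) / N) atTop (𝓝 (1 - t)) := by
    refine (tendsto_const_nhds.sub base).congr' ?_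
    filter_upwards [eventually_ge_atTop 1] with N hN
    have hNne : (N:ℝ) ≠ 0 := by positivity
    rw [hN₂cast, sub_div, div_self hNne]
  have hr₂ : Tendsto (fun N : ℕ => (N : ℝ) / (N₂ N)) atTop (𝓝 (1 - t)⁻¹) := by
    simpa [inv_div] using base2.inv₀ ht2.ne'
  -- ENNReal ratios
  set c₁ : ℕ → ℝ≥0∞ := fun N => (N : ℝ≥0∞) / (N₁ N) with hc₁def
  set c₂ : ℕ → ℝ≥0∞ := fun N => (N : ℝ≥0∞) / (N₂ N) with hc₂def
  have hc₁ : Tendsto c₁ atTop (𝓝 T₁) := by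
    have h1 : Tendsto (fun N : ℕ => ENNReal.ofReal ((N : ℝ) / (N₁ N))) atTop
        (𝓝 (ENNReal.ofReal t⁻¹)) := (ENNReal.continuous_ofReal.tendsto _).comp hr₁
    rw [ENNReal.ofReal_inv_of_pos ht0] at h1
    refine h1.congr' ?_
    filter_upwards [hN₁_t.eventually_ge_atTop 1] with N hN
    have : (0:ℝ) < (N₁ N : ℝ) := by exact_mod_cast hN
    rw [ENNReal.ofReal_div_of_pos this, ENNReal.ofReal_natCast, ENNReal.ofReal_natCast]
  have hc₂ : Tendsto c₂ atTop (𝓝 T₂) := by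
    have h1 : Tendsto (fun N : ℕ => ENNReal.ofReal ((N : ℝ) / (N₂ N))) atTop
        (𝓝 (ENNReal.ofReal (1-t)⁻¹)) := (ENNReal.continuous_ofReal.tendsto _).comp hr₂
    rw [ENNReal.ofReal_inv_of_pos ht2] at h1
    refine h1.congr' ?_
    filter_upwards [hN₂_t.eventually_ge_atTop 1] with N hN
    have : (0:ℝ) < (N₂ N : ℝ) := by exact_mod_cast hN
    rw [ENNReal.ofReal_div_of_pos this, ENNReal.ofReal_natCast, ENNReal.ofReal_natCast]
  set x₁ : ℕ → ℝ≥0∞ := fun N => ((N₁ N : ℕ) : ℝ≥0∞) ^ (1/s) * quantErrN μ₁ p (N₁ N) with hx₁def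
  set x₂ : ℕ → ℝ≥0∞ := fun N => ((N₂ N : ℕ) : ℝ≥0∞) ^ (1/s) * quantErrN μ₂ p (N₂ N) with hx₂def
  have hx₁ : limsup x₁ atTop ≤ α₁ := by
    have heq : limsup x₁ atTop
        = limsup (fun N : ℕ => (N : ℝ≥0∞) ^ (1/s) * quantErrN μ₁ p N) (Filter.map N₁ atTop) := by
      rw [Filter.limsup, Filter.limsup, Filter.map_map]; rfl
    rw [heq]
    exact limsup_le_limsup_of_le hN₁_t
  have hx₂ : limsup x₂ atTop ≤ α₂ := by
    have heq : limsup x₂ atTop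
        = limsup (fun N : ℕ => (N : ℝ≥0∞) ^ (1/s) * quantErrN μ₂ p N) (Filter.map N₂ atTop) := by
      rw [Filter.limsup, Filter.limsup, Filter.map_map]; rfl
    rw [heq]
    exact limsup_le_limsup_of_le hN₂_t
  -- pointwise bound
  have hkey : ∀ᶠ N : ℕ in atTop, (N : ℝ≥0∞) ^ (1/s) * quantErrN (μ₁ + μ₂) p N ≤
      (c₁ N ^ (p/s) * x₁ N ^ p + c₂ N ^ (p/s) * x₂ N ^ p) ^ (1/p) := by
    filter_upwards [hN₁_t.eventually_ge_atTop 1, hN₂_t.eventually_ge_atTop 1] with N h1 h2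
    have hN₁0 : ((N₁ N : ℕ) : ℝ≥0∞) ≠ 0 := Nat.cast_ne_zero.mpr (by omega)
    have hN₁top : ((N₁ N : ℕ) : ℝ≥0∞) ≠ ∞ := ENNReal.natCast_ne_top _
    have hN₂0 : ((N₂ N : ℕ) : ℝ≥0∞) ≠ 0 := Nat.cast_ne_zero.mpr (by omega)
    have hN₂top : ((N₂ N : ℕ) : ℝ≥0∞) ≠ ∞ := ENNReal.natCast_ne_top _
    have hNeq1 : (N : ℝ≥0∞) = c₁ N * (N₁ N : ℕ) := (ENNReal.div_mul_cancel hN₁0 hN₁top).symm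
    have hNeq2 : (N : ℝ≥0∞) = c₂ N * (N₂ N : ℕ) := (ENNReal.div_mul_cancel hN₂0 hN₂top).symm
    have e₁ : (N : ℝ≥0∞) ^ (p/s) * quantErrN μ₁ p (N₁ N) ^ p = c₁ N ^ (p/s) * x₁ N ^ p := by
      conv_lhs => rw [hNeq1]
      rw [ENNReal.mul_rpow_of_nonneg _ _ hps, mul_assoc, hx₁def]
      congr 1
      rw [ENNReal.mul_rpow_of_nonneg _ _ hp.le, ← ENNReal.rpow_mul]
      congr 2
      ring
    have e₂ : (N : ℝ≥0∞) ^ (p/s) * quantErrN μ₂ p (N₂ N) ^ p = c₂ N ^ (p/s) * x₂ N ^ p := by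
      conv_lhs => rw [hNeq2]
      rw [ENNReal.mul_rpow_of_nonneg _ _ hps, mul_assoc, hx₂def]
      congr 1
      rw [ENNReal.mul_rpow_of_nonneg _ _ hp.le, ← ENNReal.rpow_mul]
      congr 2
      ring
    calc (N : ℝ≥0∞) ^ (1/s) * quantErrN (μ₁ + μ₂) p N
        = (N : ℝ≥0∞) ^ (1/s) * quantErrN (μ₁ + μ₂) p (N₁ N + N₂ N) := by rw [hsum N]
      _ ≤ (N : ℝ≥0∞) ^ (1/s) * (quantErrN μ₁ p (N₁ N) ^ p + quantErrN μ₂ p (N₂ N) ^ p) ^ (1/p) :=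
          mul_le_mul_right (quantErrN_add_le μ₁ μ₂ hp _ _) _
      _ = ((N : ℝ≥0∞) ^ (p/s) * (quantErrN μ₁ p (N₁ N) ^ p + quantErrN μ₂ p (N₂ N) ^ p)) ^ (1/p) := by
          rw [ENNReal.mul_rpow_of_nonneg _ _ (by positivity : (0:ℝ) ≤ 1/p),
            ← ENNReal.rpow_mul]
          congr 2
          field_simp
      _ = (c₁ N ^ (p/s) * x₁ N ^ p + c₂ N ^ (p/s) * x₂ N ^ p) ^ (1/p) := by
          rw [mul_add, e₁, e₂]
  -- assemble limsups
  have mono_rpow : Monotone (fun x : ℝ≥0∞ => x ^ (1/p)) :=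
    fun _ _ h => ENNReal.rpow_le_rpow h (by positivity)
  have mono_rpow_p : Monotone (fun x : ℝ≥0∞ => x ^ p) :=
    fun _ _ h => ENNReal.rpow_le_rpow h hp.le
  have step1 : upperQuantCoeff (μ₁ + μ₂) p s ≤
      limsup (fun N => (c₁ N ^ (p/s) * x₁ N ^ p + c₂ N ^ (p/s) * x₂ N ^ p) ^ (1/p)) atTop :=
    limsup_le_limsup hkey
  have step2 : limsup (fun N => (c₁ N ^ (p/s) * x₁ N ^ p + c₂ N ^ (p/s) * x₂ N ^ p) ^ (1/p)) atTop
      = (limsup (fun N => c₁ N ^ (p/s) * x₁ N ^ p + c₂ N ^ (p/s) * x₂ N ^ p) atTop) ^ (1/p) :=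
    (Monotone.map_limsup_of_continuousAt mono_rpow
      (fun N => c₁ N ^ (p/s) * x₁ N ^ p + c₂ N ^ (p/s) * x₂ N ^ p)
      ENNReal.continuous_rpow_const.continuousAt).symm
  have hlim_c₁ : limsup (fun N => c₁ N ^ (p/s)) atTop = T₁ ^ (p/s) :=
    (Filter.Tendsto.limsup_eq ((ENNReal.continuous_rpow_const.tendsto T₁).comp hc₁))
  have hlim_c₂ : limsup (fun N => c₂ N ^ (p/s)) atTop = T₂ ^ (p/s) :=
    (Filter.Tendsto.limsup_eq ((ENNReal.continuous_rpow_const.tendsto T₂).comp hc₂))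
  have hlim_x₁ : limsup (fun N => x₁ N ^ p) atTop = (limsup x₁ atTop) ^ p :=
    (Monotone.map_limsup_of_continuousAt mono_rpow_p x₁
      ENNReal.continuous_rpow_const.continuousAt).symm
  have hlim_x₂ : limsup (fun N => x₂ N ^ p) atTop = (limsup x₂ atTop) ^ p :=
    (Monotone.map_limsup_of_continuousAt mono_rpow_p x₂
      ENNReal.continuous_rpow_const.continuousAt).symm
  have hmul₁ : limsup (fun N => c₁ N ^ (p/s) * x₁ N ^ p) atTop ≤ T₁ ^ (p/s) * α₁ ^ p := by
    have h := ENNReal.limsup_mul_le' (u := fun N => c₁ N ^ (p/s)) (v := fun N => x₁ N ^ p)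
      (f := atTop) (Or.inl (by rw [hlim_c₁]; exact hT₁ps0))
      (Or.inl (by rw [hlim_c₁]; exact hT₁pstop))
    have h2 : limsup (fun N => c₁ N ^ (p/s) * x₁ N ^ p) atTop ≤
        limsup (fun N => c₁ N ^ (p/s)) atTop * limsup (fun N => x₁ N ^ p) atTop := h
    refine h2.trans ?_
    rw [hlim_c₁, hlim_x₁]
    exact mul_le_mul_right (ENNReal.rpow_le_rpow hx₁ hp.le) _
  have hmul₂ : limsup (fun N => c₂ N ^ (p/s) * x₂ N ^ p) atTop ≤ T₂ ^ (p/s) * α₂ ^ p := by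
    have h := ENNReal.limsup_mul_le' (u := fun N => c₂ N ^ (p/s)) (v := fun N => x₂ N ^ p)
      (f := atTop) (Or.inl (by rw [hlim_c₂]; exact hT₂ps0))
      (Or.inl (by rw [hlim_c₂]; exact hT₂pstop))
    have h2 : limsup (fun N => c₂ N ^ (p/s) * x₂ N ^ p) atTop ≤
        limsup (fun N => c₂ N ^ (p/s)) atTop * limsup (fun N => x₂ N ^ p) atTop := h
    refine h2.trans ?_
    rw [hlim_c₂, hlim_x₂]
    exact mul_le_mul_right (ENNReal.rpow_le_rpow hx₂ hp.le) _
  have step3 : limsup (fun N => c₁ N ^ (p/s) * x₁ N ^ p + c₂ N ^ (p/s) * x₂ N ^ p) atTop ≤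
      T₁ ^ (p/s) * α₁ ^ p + T₂ ^ (p/s) * α₂ ^ p :=
    (my_limsup_add_le _ _).trans (add_le_add hmul₁ hmul₂)
  calc upperQuantCoeff (μ₁ + μ₂) p s
      ≤ (limsup (fun N => c₁ N ^ (p/s) * x₁ N ^ p + c₂ N ^ (p/s) * x₂ N ^ p) atTop) ^ (1/p) := by
        rw [← step2]; exact step1
    _ ≤ (T₁ ^ (p/s) * α₁ ^ p + T₂ ^ (p/s) * α₂ ^ p) ^ (1/p) :=
        ENNReal.rpow_le_rpow step3 (by positivity)

end Aux

/-- p'-subadditivity of upper quantization coefficients. -/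
theorem stmt_9 {X : Type*} [MetricSpace X] [CompleteSpace X]
    [TopologicalSpace.SeparableSpace X] [MeasurableSpace X] [BorelSpace X]
    (μ₁ μ₂ : Measure X) [IsFiniteMeasure μ₁] [IsFiniteMeasure μ₂]
    (p s : ℝ) (hp : 1 ≤ p) (hs : 0 < s)
    (hmom₁ : ∃ x₀ : X, ∫⁻ x, ENNReal.ofReal (dist x x₀ ^ p) ∂μ₁ < ⊤)
    (hmom₂ : ∃ x₀ : X, ∫⁻ x, ENNReal.ofReal (dist x x₀ ^ p) ∂μ₂ < ⊤)
    (p' : ℝ) (hp' : p' = s * p / (s + p)) :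
    upperQuantCoeff (μ₁ + μ₂) p s ^ p' ≤
      upperQuantCoeff μ₁ p s ^ p' + upperQuantCoeff μ₂ p s ^ p' := by
  have hp0 : 0 < p := lt_of_lt_of_le one_pos hp
  have hp'0 : 0 < p' := by rw [hp']; positivity
  have hsp : s + p ≠ 0 := by positivity
  have hrecip : 1/p' = 1/p + 1/s := by
    rw [hp', one_div_div, div_add_div _ _ hp0.ne' hs.ne', one_mul, mul_one, mul_comm p s]
  have hexp : p / p' = 1 + p / s := by
    calc p / p' = p * (1/p') := by ring
      _ = p * (1/p + 1/s) := by rw [hrecip]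
      _ = 1 + p / s := by
        rw [mul_add, mul_one_div, div_self hp0.ne', mul_one_div]
  set α₁ := upperQuantCoeff μ₁ p s with hα₁def
  set α₂ := upperQuantCoeff μ₂ p s with hα₂def
  set L := upperQuantCoeff (μ₁ + μ₂) p s with hLdef
  by_cases h1 : α₁ = ∞
  · rw [h1, ENNReal.top_rpow_of_pos hp'0, top_add]; exact le_top
  by_cases h2 : α₂ = ∞
  · rw [h2, ENNReal.top_rpow_of_pos hp'0, add_top]; exact le_top
  -- main case: perturb by δ
  set d : ℕ → ℝ≥0∞ := fun n => (((n+1 : ℕ) : ℝ≥0∞))⁻¹ with hddef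
  have hd0 : ∀ n, d n ≠ 0 := fun n => by simp [hddef]
  have hdtop : ∀ n, d n ≠ ∞ := fun n => by
    simp [hddef]
  have hdlim : Tendsto d atTop (𝓝 0) := by
    have h := ENNReal.tendsto_inv_nat_nhds_zero.comp (tendsto_add_atTop_nat 1)
    exact Filter.Tendsto.congr (fun n => rfl) h
  have key : ∀ n : ℕ, L ^ p' ≤ (α₁ + d n) ^ p' + (α₂ + d n) ^ p' := by
    intro n
    set a := α₁ + d n with hadef
    set b := α₂ + d n with hbdef
    have ha0 : a ≠ 0 := fun h => (hd0 n) (by simpa using (add_eq_zero.mp h).2)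
    have hatop : a ≠ ∞ := ENNReal.add_ne_top.2 ⟨h1, hdtop n⟩
    have hb0 : b ≠ 0 := fun h => (hd0 n) (by simpa using (add_eq_zero.mp h).2)
    have hbtop : b ≠ ∞ := ENNReal.add_ne_top.2 ⟨h2, hdtop n⟩
    set A := a ^ p' with hAdef
    set B := b ^ p' with hBdef
    have hA0 : A ≠ 0 := (ENNReal.rpow_pos (pos_iff_ne_zero.mpr ha0) hatop).ne'
    have hAtop : A ≠ ∞ := ENNReal.rpow_ne_top_of_nonneg hp'0.le hatop
    have hB0 : B ≠ 0 := (ENNReal.rpow_pos (pos_iff_ne_zero.mpr hb0) hbtop).ne'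
    have hBtop : B ≠ ∞ := ENNReal.rpow_ne_top_of_nonneg hp'0.le hbtop
    have hABtop : A + B ≠ ∞ := ENNReal.add_ne_top.2 ⟨hAtop, hBtop⟩
    have hAB0 : A + B ≠ 0 := fun h => hA0 (add_eq_zero.mp h).1
    set t := (A / (A + B)).toReal with htdef
    have hdivtop : A / (A + B) ≠ ∞ := (ENNReal.div_lt_top hAtop hAB0).ne
    have hdiv0 : A / (A + B) ≠ 0 := (ENNReal.div_pos hA0 hABtop).ne'
    have hoft : ENNReal.ofReal t = A / (A + B) := ENNReal.ofReal_toReal hdivtop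
    have ht0 : 0 < t := ENNReal.toReal_pos hdiv0 hdivtop
    have ht1 : t < 1 := by
      rw [htdef, ENNReal.toReal_div]
      rw [div_lt_one (ENNReal.toReal_pos hAB0 hABtop)]
      exact (ENNReal.toReal_lt_toReal hAtop hABtop).mpr (ENNReal.lt_add_right hAtop hB0)
    have hoft' : ENNReal.ofReal (1 - t) = B / (A + B) := by
      have heq : 1 - t = (B / (A + B)).toReal := by
        rw [htdef, ENNReal.toReal_div, ENNReal.toReal_div,
          ENNReal.toReal_add hAtop hBtop]
        have hApos : 0 < A.toReal := ENNReal.toReal_pos hA0 hAtop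
        have hBpos : 0 < B.toReal := ENNReal.toReal_pos hB0 hBtop
        field_simp
        ring
      rw [heq, ENNReal.ofReal_toReal (ENNReal.div_lt_top hBtop hAB0).ne]
    -- apply the limsup bound
    have hL : L ≤ ((ENNReal.ofReal t)⁻¹ ^ (p/s) * α₁ ^ p
        + (ENNReal.ofReal (1 - t))⁻¹ ^ (p/s) * α₂ ^ p) ^ (1/p) :=
      limsup_bound μ₁ μ₂ hp0 hs ht0 ht1
    have hL2 : L ≤ ((ENNReal.ofReal t)⁻¹ ^ (p/s) * a ^ p
        + (ENNReal.ofReal (1 - t))⁻¹ ^ (p/s) * b ^ p) ^ (1/p) := by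
      refine hL.trans (ENNReal.rpow_le_rpow (add_le_add ?_ ?_) (by positivity))
      · exact mul_le_mul_right (ENNReal.rpow_le_rpow le_self_add hp0.le) _
      · exact mul_le_mul_right (ENNReal.rpow_le_rpow le_self_add hp0.le) _
    -- algebraic evaluation
    have hps : (0:ℝ) ≤ p / s := by positivity
    have hAps0 : A ^ (p/s) ≠ 0 := (ENNReal.rpow_pos (pos_iff_ne_zero.mpr hA0) hAtop).ne'
    have hApstop : A ^ (p/s) ≠ ∞ := ENNReal.rpow_ne_top_of_nonneg hps hAtop
    have hBps0 : B ^ (p/s) ≠ 0 := (ENNReal.rpow_pos (pos_iff_ne_zero.mpr hB0) hBtop).ne'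
    have hBpstop : B ^ (p/s) ≠ ∞ := ENNReal.rpow_ne_top_of_nonneg hps hBtop
    have cancel : ∀ x y z : ℝ≥0∞, y ≠ 0 → y ≠ ∞ → x / y * (z * y) = x * z := by
      intro x y z h0 htop
      rw [div_eq_mul_inv, mul_comm z y, ← mul_assoc, mul_assoc x y⁻¹ y,
        ENNReal.inv_mul_cancel h0 htop, mul_one]
    have hap : a ^ p = A * A ^ (p/s) := by
      have h3 : a ^ p = A ^ (p / p') := by
        rw [hAdef, ← ENNReal.rpow_mul]
        congr 1
        field_simp
      rw [h3, hexp, ENNReal.rpow_add _ _ hA0 hAtop, ENNReal.rpow_one]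
    have hbp : b ^ p = B * B ^ (p/s) := by
      have h3 : b ^ p = B ^ (p / p') := by
        rw [hBdef, ← ENNReal.rpow_mul]
        congr 1
        field_simp
      rw [h3, hexp, ENNReal.rpow_add _ _ hB0 hBtop, ENNReal.rpow_one]
    have term₁ : (ENNReal.ofReal t)⁻¹ ^ (p/s) * a ^ p = (A + B) ^ (p/s) * A := by
      rw [hoft, ENNReal.inv_div (Or.inl hABtop) (Or.inl hAB0),
        ENNReal.div_rpow_of_nonneg _ _ hps, hap]
      exact cancel _ _ _ hAps0 hApstop
    have term₂ : (ENNReal.ofReal (1-t))⁻¹ ^ (p/s) * b ^ p = (A + B) ^ (p/s) * B := by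
      rw [hoft', ENNReal.inv_div (Or.inl hABtop) (Or.inl hAB0),
        ENNReal.div_rpow_of_nonneg _ _ hps, hbp]
      exact cancel _ _ _ hBps0 hBpstop
    have heval : ((ENNReal.ofReal t)⁻¹ ^ (p/s) * a ^ p
        + (ENNReal.ofReal (1 - t))⁻¹ ^ (p/s) * b ^ p) ^ (1/p) = (A + B) ^ (1/p') := by
      rw [term₁, term₂, ← mul_add]
      have h4 : (A + B) ^ (p/s) * (A + B) = (A + B) ^ (p/s + 1) := by
        rw [ENNReal.rpow_add _ _ hAB0 hABtop, ENNReal.rpow_one]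
      rw [h4, ← ENNReal.rpow_mul]
      congr 1
      have h5 : p/s + 1 = p/p' := by rw [hexp]; ring
      rw [h5, div_mul_div_comm, mul_one, mul_comm p' p, ← div_div, div_self hp0.ne']
    rw [heval] at hL2
    calc L ^ p' ≤ ((A + B) ^ (1/p')) ^ p' := ENNReal.rpow_le_rpow hL2 hp'0.le
      _ = A + B := by
        rw [← ENNReal.rpow_mul, one_div_mul_cancel hp'0.ne', ENNReal.rpow_one]
  -- take the limit n → ∞
  have hcont : Continuous (fun δ : ℝ≥0∞ => (α₁ + δ) ^ p' + (α₂ + δ) ^ p') := by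
    exact ((ENNReal.continuous_rpow_const.comp (continuous_const.add continuous_id)).add
      (ENNReal.continuous_rpow_const.comp (continuous_const.add continuous_id)))
  have htend : Tendsto (fun n : ℕ => (α₁ + d n) ^ p' + (α₂ + d n) ^ p') atTop
      (𝓝 ((α₁ + 0) ^ p' + (α₂ + 0) ^ p')) := (hcont.tendsto 0).comp hdlim
  have := ge_of_tendsto' htend key
  simpa using this
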